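/- arXiv:1801.05669 — 6 statements merged into one kernel-verified Lean document; each statement's English description precedes it below -/
import Mathlib

section
/- Let p ≥ 1 be a natural number and let q be a real polynomial of degree at most p. Then there exists a unique function Q : ℝ^p → ℝ which is symmetric (Q(x ∘ σ) = Q(x) for every permutation σ of {1,…,p}), multiaffine (for each index i and each fixed choice of the other arguments, the map t ↦ Q(x₁,…,x_{i−1}, t, x_{i+1},…,x_p) is an affine function of t), and satisfies Q(ξ, ξ, …, ξ) = q(ξ) for all ξ ∈ ℝ. -/
open Finset Polynomial

namespace BlossomAux

variable {p : ℕ}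

/-- indicator vector of a finset -/
noncomputable def chi (S : Finset (Fin p)) : Fin p → ℝ := fun i => if i ∈ S then 1 else 0

/-- replace the coordinates of `x` in `u` by the indicator of `S` -/
noncomputable def merge (x : Fin p → ℝ) (u S : Finset (Fin p)) : Fin p → ℝ :=
  fun i => if i ∈ u then (if i ∈ S then (1 : ℝ) else 0) else x i

/-- multiaffine -/
def MA (D : (Fin p → ℝ) → ℝ) : Prop :=
  ∀ (i : Fin p) (x : Fin p → ℝ), ∃ a b : ℝ, ∀ t : ℝ, D (Function.update x i t) = a + b * t

lemma MA.step {D : (Fin p → ℝ) → ℝ} (hD : MA D) (i : Fin p) (x : Fin p → ℝ) (t : ℝ) :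
    D (Function.update x i t)
      = (1 - t) * D (Function.update x i 0) + t * D (Function.update x i 1) := by
  obtain ⟨a, b, h⟩ := hD i x
  rw [h, h, h]; ring

lemma expand {D : (Fin p → ℝ) → ℝ} (hD : MA D) (x : Fin p → ℝ) (u : Finset (Fin p)) :
    D x = ∑ S ∈ u.powerset,
      ((∏ i ∈ S, x i) * ∏ i ∈ u \ S, (1 - x i)) * D (merge x u S) := by
  classical
  induction u using Finset.induction_on with
  | empty =>
      have hm : merge x ∅ ∅ = x := by funext i; simp [merge]
      simp [hm]
  | @insert j s hj ih =>
      have key : ∀ S ∈ s.powerset,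
          ((∏ i ∈ S, x i) * ∏ i ∈ s \ S, (1 - x i)) * D (merge x s S)
            = ((∏ i ∈ S, x i) * ∏ i ∈ insert j s \ S, (1 - x i))
                * D (merge x (insert j s) S)
              + ((∏ i ∈ insert j S, x i) * ∏ i ∈ insert j s \ insert j S, (1 - x i))
                * D (merge x (insert j s) (insert j S)) := by
        intro S hS
        have hSs : S ⊆ s := mem_powerset.mp hS
        have hjS : j ∉ S := fun h => hj (hSs h)
        have e0 : merge x (insert j s) S = Function.update (merge x s S) j 0 := by
          funext i
          rcases eq_or_ne i j with rfl | hne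
          · simp [merge, hjS]
          · simp [merge, Function.update_of_ne hne, mem_insert, hne]
        have e1 : merge x (insert j s) (insert j S)
            = Function.update (merge x s S) j 1 := by
          funext i
          rcases eq_or_ne i j with rfl | hne
          · simp [merge]
          · simp [merge, Function.update_of_ne hne, mem_insert, hne]
        have hxj : Function.update (merge x s S) j (x j) = merge x s S := by
          have : merge x s S j = x j := by simp [merge, hj]
          conv_lhs => rw [← this]
          exact Function.update_eq_self _ _
        have hkey : D (merge x s S)
            = (1 - x j) * D (merge x (insert j s) S)
              + x j * D (merge x (insert j s) (insert j S)) := by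
          rw [e0, e1, ← hD.step j (merge x s S) (x j), hxj]
        have hjsS : j ∉ s \ S := fun h => hj (mem_sdiff.mp h).1
        have P0 : ∏ i ∈ insert j s \ S, (1 - x i)
            = (1 - x j) * ∏ i ∈ s \ S, (1 - x i) := by
          rw [insert_sdiff_of_notMem _ hjS, prod_insert hjsS]
        have P1 : insert j s \ insert j S = s \ S := by
          ext i
          have hij : i ∈ s → i ≠ j := fun h he => hj (he ▸ h)
          simp only [mem_sdiff, mem_insert]
          constructor
          · rintro ⟨h1 | h1, h2⟩
            · exact absurd (Or.inl h1) h2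
            · exact ⟨h1, fun h => h2 (Or.inr h)⟩
          · rintro ⟨h1, h2⟩
            exact ⟨Or.inr h1, fun h => h.elim (hij h1) h2⟩
        rw [hkey, P0, P1, prod_insert hjS]
        ring
      rw [sum_powerset_insert hj, ih, ← sum_add_distrib]
      exact Finset.sum_congr rfl key

lemma chi_card_eq {D : (Fin p → ℝ) → ℝ}
    (hsym : ∀ (σ : Equiv.Perm (Fin p)) (y : Fin p → ℝ), D (y ∘ σ) = D y)
    {S T : Finset (Fin p)} (h : S.card = T.card) : D (chi S) = D (chi T) := by
  classical
  have hc : Fintype.card {x : Fin p // x ∈ T} = Fintype.card {x : Fin p // x ∈ S} := by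
    simp only [Fintype.card_coe, h]
  let e : {x : Fin p // x ∈ T} ≃ {x : Fin p // x ∈ S} := Fintype.equivOfCardEq hc
  have hcomp : chi S ∘ e.extendSubtype = chi T := by
    funext i
    by_cases hi : i ∈ T
    · have := e.extendSubtype_mem i hi
      simp [chi, Function.comp, hi, this]
    · have := e.extendSubtype_not_mem i hi
      simp [chi, Function.comp, hi, this]
  rw [← hcomp, hsym]

/-- a canonical subset of `Fin p` of cardinality `k` (for `k ≤ p`) -/
noncomputable def canon (p k : ℕ) : Finset (Fin p) :=
  Finset.univ.filter (fun i => (i : ℕ) < k)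

lemma canon_card {k : ℕ} (hk : k ≤ p) : (canon p k).card = k := by
  classical
  have : canon p k
      = (Finset.range k).attachFin (fun m hm => lt_of_lt_of_le (mem_range.mp hm) hk) := by
    ext i
    simp [canon, Finset.mem_attachFin]
  rw [this, Finset.card_attachFin, Finset.card_range]

lemma sum_card (g : ℕ → ℝ) :
    ∑ S : Finset (Fin p), g S.card
      = ∑ k ∈ Finset.range (p + 1), (p.choose k : ℝ) * g k := by
  classical
  rw [← Finset.powerset_univ, Finset.sum_powerset_apply_card]
  simp [Finset.card_univ, nsmul_eq_mul]

lemma bern_zero {n : ℕ} (c : ℕ → ℝ)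
    (h : ∀ ξ : ℝ, ∑ k ∈ Finset.range (n + 1), c k * (ξ ^ k * (1 - ξ) ^ (n - k)) = 0) :
    ∀ k, k ≤ n → c k = 0 := by
  classical
  set P : Polynomial ℝ :=
    ∑ k ∈ Finset.range (n + 1), Polynomial.C (c k) * (X ^ k * (1 - X) ^ (n - k)) with hPdef
  have hP0 : P = 0 := by
    apply Polynomial.funext
    intro ξ
    have : P.eval ξ = ∑ k ∈ Finset.range (n + 1), c k * (ξ ^ k * (1 - ξ) ^ (n - k)) := by
      simp [hPdef, Polynomial.eval_finset_sum]
    simp [this, h ξ]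
  intro k
  induction k using Nat.strong_induction_on with
  | _ k ih =>
    intro hk
    have hc : P.coeff k = 0 := by rw [hP0]; simp
    rw [hPdef, Polynomial.finset_sum_coeff] at hc
    rw [Finset.sum_eq_single_of_mem k (Finset.mem_range.mpr (Nat.lt_succ_of_le hk))] at hc
    · have hterm : (Polynomial.C (c k) * (X ^ k * (1 - X) ^ (n - k))).coeff k = c k := by
        rw [show Polynomial.C (c k) * (X ^ k * (1 - X) ^ (n - k))
              = (Polynomial.C (c k) * (1 - X) ^ (n - k)) * X ^ k by ring]
        rw [Polynomial.coeff_mul_X_pow', if_pos le_rfl]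
        simp [Polynomial.coeff_zero_eq_eval_zero]
      rwa [hterm] at hc
    · intro j hj hjk
      rcases lt_or_gt_of_ne hjk with hlt | hgt
      · rw [ih j hlt (le_trans hlt.le hk)]
        simp
      · rw [show Polynomial.C (c j) * (X ^ j * (1 - X) ^ (n - j))
              = (Polynomial.C (c j) * (1 - X) ^ (n - j)) * X ^ j by ring]
        rw [Polynomial.coeff_mul_X_pow', if_neg (not_le.mpr hgt)]

/-- The blossom. -/
noncomputable def B (p : ℕ) (q : Polynomial ℝ) (x : Fin p → ℝ) : ℝ :=
  ∑ S : Finset (Fin p), (q.coeff S.card / (p.choose S.card : ℝ)) * ∏ i ∈ S, x i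

lemma B_symm (q : Polynomial ℝ) (σ : Equiv.Perm (Fin p)) (x : Fin p → ℝ) :
    B p q (x ∘ σ) = B p q x := by
  classical
  refine Fintype.sum_equiv σ.finsetCongr _ _ ?_
  intro S
  simp [Equiv.finsetCongr_apply, Finset.card_map, Finset.prod_map, Function.comp]

lemma B_ma (q : Polynomial ℝ) : MA (B p q) := by
  classical
  intro i x
  refine ⟨∑ S ∈ (Finset.univ : Finset (Finset (Fin p))).filter (fun S => i ∉ S),
      (q.coeff S.card / (p.choose S.card : ℝ)) * ∏ j ∈ S, x j,
    ∑ S ∈ (Finset.univ : Finset (Finset (Fin p))).filter (fun S => i ∈ S),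
      (q.coeff S.card / (p.choose S.card : ℝ)) * ∏ j ∈ S.erase i, x j, ?_⟩
  intro t
  unfold B
  rw [← Finset.sum_filter_add_sum_filter_not Finset.univ (fun S => i ∈ S)]
  have h1 : ∀ S ∈ (Finset.univ : Finset (Finset (Fin p))).filter (fun S => i ∈ S),
      (q.coeff S.card / (p.choose S.card : ℝ)) * ∏ j ∈ S, Function.update x i t j
        = ((q.coeff S.card / (p.choose S.card : ℝ)) * ∏ j ∈ S.erase i, x j) * t := by
    intro S hS
    have hiS : i ∈ S := (Finset.mem_filter.mp hS).2
    rw [← Finset.mul_prod_erase S _ hiS]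
    have : ∀ j ∈ S.erase i, Function.update x i t j = x j := by
      intro j hj
      exact Function.update_of_ne (Finset.mem_erase.mp hj).1 _ _
    rw [Finset.prod_congr rfl this, Function.update_self]
    ring
  have h2 : ∀ S ∈ (Finset.univ : Finset (Finset (Fin p))).filter (fun S => i ∉ S),
      (q.coeff S.card / (p.choose S.card : ℝ)) * ∏ j ∈ S, Function.update x i t j
        = (q.coeff S.card / (p.choose S.card : ℝ)) * ∏ j ∈ S, x j := by
    intro S hS
    have hiS : i ∉ S := (Finset.mem_filter.mp hS).2
    congr 1
    refine Finset.prod_congr rfl fun j hj => ?_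
    exact Function.update_of_ne (fun he => hiS (by rwa [he] at hj)) _ _
  rw [Finset.sum_congr rfl h1, Finset.sum_congr rfl h2, ← Finset.sum_mul]
  ring

lemma B_diag (q : Polynomial ℝ) (hq : q.natDegree ≤ p) (ξ : ℝ) :
    B p q (fun _ => ξ) = q.eval ξ := by
  classical
  unfold B
  have h1 : ∀ S : Finset (Fin p),
      (q.coeff S.card / (p.choose S.card : ℝ)) * ∏ _i ∈ S, ξ
        = (fun k => (q.coeff k / (p.choose k : ℝ)) * ξ ^ k) S.card := by
    intro S; simp
  rw [Finset.sum_congr rfl fun S _ => h1 S,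
    sum_card (fun k => (q.coeff k / (p.choose k : ℝ)) * ξ ^ k)]
  rw [Polynomial.eval_eq_sum_range' (Nat.lt_succ_of_le hq)]
  refine Finset.sum_congr rfl fun k hk => ?_
  have hkp : k ≤ p := Nat.lt_succ_iff.mp (Finset.mem_range.mp hk)
  have hch : (p.choose k : ℝ) ≠ 0 := by
    exact_mod_cast (Nat.choose_pos hkp).ne'
  field_simp

end BlossomAux

open BlossomAux

/-- **Existence and uniqueness of the blossom (polar form).**
Let `p ≥ 1` and let `q` be a real polynomial of degree at most `p`. Then there exists a
unique function `Q : ℝ^p → ℝ` which is symmetric, multiaffine, and whose diagonal is `q`. -/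
theorem blossom_exists_unique (p : ℕ) (hp : 1 ≤ p) (q : Polynomial ℝ)
    (hq : q.natDegree ≤ p) :
    ∃! Q : (Fin p → ℝ) → ℝ,
      (∀ (σ : Equiv.Perm (Fin p)) (x : Fin p → ℝ), Q (x ∘ σ) = Q x) ∧
      (∀ (i : Fin p) (x : Fin p → ℝ), ∃ a b : ℝ,
        ∀ t : ℝ, Q (Function.update x i t) = a + b * t) ∧
      (∀ ξ : ℝ, Q (fun _ => ξ) = q.eval ξ) := by
  classical
  refine ⟨B p q, ⟨B_symm q, B_ma q, B_diag q hq⟩, ?_⟩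
  rintro Q ⟨hQsym, hQma, hQdiag⟩
  -- the difference is symmetric, multiaffine, with zero diagonal
  set D : (Fin p → ℝ) → ℝ := fun y => Q y - B p q y with hDdef
  have hDma : MA D := by
    intro i x
    obtain ⟨a1, b1, h1⟩ := hQma i x
    obtain ⟨a2, b2, h2⟩ := B_ma q i x
    exact ⟨a1 - a2, b1 - b2, fun t => by simp [hDdef, h1 t, h2 t]; ring⟩
  have hDsym : ∀ (σ : Equiv.Perm (Fin p)) (y : Fin p → ℝ), D (y ∘ σ) = D y := by
    intro σ y; simp [hDdef, hQsym σ y, B_symm q σ y]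
  have hDdiag : ∀ ξ : ℝ, D (fun _ => ξ) = 0 := by
    intro ξ; simp [hDdef, hQdiag ξ, B_diag q hq ξ]
  -- values on indicator vectors, as a function of cardinality
  set g : ℕ → ℝ := fun k => D (chi (canon p k)) with hgdef
  have hchi : ∀ S : Finset (Fin p), D (chi S) = g S.card := by
    intro S
    have hcard : S.card ≤ p := by
      simpa [Fintype.card_fin] using Finset.card_le_univ S
    exact chi_card_eq hDsym ((canon_card hcard).symm)
  have hmerge : ∀ (ξ : ℝ) (S : Finset (Fin p)), merge (fun _ => ξ) Finset.univ S = chi S := by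
    intro ξ S; funext i; simp [merge, chi]
  -- Bernstein-type identity from the zero diagonal
  have hbern : ∀ ξ : ℝ, ∑ k ∈ Finset.range (p + 1),
      ((p.choose k : ℝ) * g k) * (ξ ^ k * (1 - ξ) ^ (p - k)) = 0 := by
    intro ξ
    have hexp := expand hDma (fun _ => ξ) Finset.univ
    rw [hDdiag ξ] at hexp
    have hterm : ∀ S ∈ (Finset.univ : Finset (Fin p)).powerset,
        ((∏ _i ∈ S, ξ) * ∏ _i ∈ Finset.univ \ S, (1 - ξ))
            * D (merge (fun _ => ξ) Finset.univ S)
          = (fun k => g k * (ξ ^ k * (1 - ξ) ^ (p - k))) S.card := by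
      intro S _
      have hcard : (Finset.univ \ S).card = p - S.card := by
        rw [Finset.card_sdiff_of_subset (Finset.subset_univ S)]
        simp [Fintype.card_fin]
      rw [hmerge, hchi S]
      simp [Finset.prod_const, hcard]
      ring
    rw [Finset.sum_congr rfl hterm, Finset.powerset_univ,
      sum_card (fun k => g k * (ξ ^ k * (1 - ξ) ^ (p - k)))] at hexp
    refine Eq.trans ?_ hexp.symm
    exact Finset.sum_congr rfl fun k _ => by ring
  have hg0 : ∀ k, k ≤ p → g k = 0 := by
    intro k hk
    have := bern_zero (fun k => (p.choose k : ℝ) * g k) hbern k hk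
    have hch : (p.choose k : ℝ) ≠ 0 := by exact_mod_cast (Nat.choose_pos hk).ne'
    exact (mul_eq_zero.mp this).resolve_left hch
  have hD0 : ∀ x, D x = 0 := by
    intro x
    rw [expand hDma x Finset.univ]
    refine Finset.sum_eq_zero fun S _ => ?_
    have hm : merge x Finset.univ S = chi S := by
      funext i; simp [merge, chi]
    have hcard : S.card ≤ p := by
      simpa [Fintype.card_fin] using Finset.card_le_univ S
    rw [hm, hchi S, hg0 S.card hcard, mul_zero]
  funext x
  have := hD0 x
  simp [hDdef] at this
  linarith
end

section
/- Let p ≥ 1, let q be a real polynomial of degree at most p−1, and let Q : ℝ^{p−1} → ℝ be a symmetric multiaffine function with Q(ξ,…,ξ) = q(ξ) for all ξ ∈ ℝ. Let ω₀, ω₁ ∈ ℝ and L(ξ) = ω₀(1−ξ) + ω₁ξ. Then the function R : ℝ^p → ℝ defined by R(t₁,…,t_p) = (1/p) · Σ_{m=1}^{p} Q(t₁,…,t_{m−1}, t_{m+1},…,t_p) · L(t_m) is symmetric, multiaffine, and satisfies R(ξ,…,ξ) = L(ξ)·q(ξ) for all ξ ∈ ℝ; that is, R is the blossom of the product polynomial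 L·q. -/
/-- **Multiplication formula for blossoms.**
If `Q : ℝ^(p-1) → ℝ` is the blossom of a polynomial `q` of degree at most `p-1` and
`L(ξ) = ω₀(1-ξ) + ω₁ξ`, then
`R(t₁,…,t_p) = (1/p) · Σ_{m=1}^{p} Q(t₁,…,t_{m-1},t_{m+1},…,t_p) · L(t_m)`
is symmetric, multiaffine, and has diagonal `L·q`, i.e. it is the blossom of `L·q`. -/
theorem blossom_mul_affine (p : ℕ) (hp : 1 ≤ p) (q : Polynomial ℝ)
    (hq : q.natDegree ≤ p - 1)
    (Q : (Fin (p - 1) → ℝ) → ℝ)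
    (hQsym : ∀ (σ : Equiv.Perm (Fin (p - 1))) (x : Fin (p - 1) → ℝ), Q (x ∘ σ) = Q x)
    (hQaff : ∀ (i : Fin (p - 1)) (x : Fin (p - 1) → ℝ), ∃ a b : ℝ,
      ∀ t : ℝ, Q (Function.update x i t) = a + b * t)
    (hQdiag : ∀ ξ : ℝ, Q (fun _ => ξ) = q.eval ξ)
    (ω₀ ω₁ : ℝ) (L : ℝ → ℝ) (hL : ∀ ξ : ℝ, L ξ = ω₀ * (1 - ξ) + ω₁ * ξ)
    (R : (Fin p → ℝ) → ℝ)
    (hR : ∀ x : Fin p → ℝ,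
      R x = (1 / (p : ℝ)) * ∑ m : Fin p,
        Q (fun j : Fin (p - 1) =>
            if (j : ℕ) < (m : ℕ) then x ⟨j, by have := j.isLt; omega⟩
            else x ⟨(j : ℕ) + 1, by have := j.isLt; omega⟩) * L (x m)) :
    (∀ (σ : Equiv.Perm (Fin p)) (x : Fin p → ℝ), R (x ∘ σ) = R x) ∧
    (∀ (i : Fin p) (x : Fin p → ℝ), ∃ a b : ℝ,
      ∀ t : ℝ, R (Function.update x i t) = a + b * t) ∧
    (∀ ξ : ℝ, R (fun _ => ξ) = L ξ * q.eval ξ) := by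
  obtain ⟨n, rfl⟩ : ∃ n, p = n + 1 := ⟨p - 1, by omega⟩
  -- `Fin (p - 1)` is definitionally `Fin n`; retype the hypotheses.
  have hQsym' : ∀ (σ : Equiv.Perm (Fin n)) (x : Fin n → ℝ), Q (x ∘ σ) = Q x := hQsym
  have hQaff' : ∀ (i : Fin n) (x : Fin n → ℝ), ∃ a b : ℝ,
      ∀ t : ℝ, Q (Function.update x i t) = a + b * t := hQaff
  have hQdiag' : ∀ ξ : ℝ, Q (fun _ : Fin n => ξ) = q.eval ξ := hQdiag
  clear hQsym hQaff hQdiag hq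
  have hdel : ∀ (x : Fin (n + 1) → ℝ) (m : Fin (n + 1)),
      (fun j : Fin n =>
        if (j : ℕ) < (m : ℕ) then x ⟨(j : ℕ), by have := j.isLt; omega⟩
        else x ⟨(j : ℕ) + 1, by have := j.isLt; omega⟩) = x ∘ m.succAbove := by
    intro x m
    funext j
    simp only [Function.comp_apply, Fin.succAbove, Fin.lt_def, Fin.coe_castSucc]
    split <;> rfl
  have hR' : ∀ x : Fin (n + 1) → ℝ,
      R x = (1 / ((n : ℝ) + 1)) * ∑ m : Fin (n + 1), Q (x ∘ m.succAbove) * L (x m) := by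
    intro x
    rw [hR]
    push_cast
    congr 1
    refine Finset.sum_congr rfl fun m _ => ?_
    congr 1
    exact congrArg Q (hdel x m)
  have hn1 : ((n : ℝ) + 1) ≠ 0 := by positivity
  refine ⟨?_, ?_, ?_⟩
  · -- symmetry
    intro σ x
    rw [hR', hR']
    congr 1
    rw [← Equiv.sum_comp σ (fun m => Q (x ∘ m.succAbove) * L (x m))]
    refine Finset.sum_congr rfl fun m _ => ?_
    have hcomp : ∀ j : Fin n, σ (m.succAbove j) = (σ m).succAbove
        ((Equiv.removeNone ((finSuccEquiv' m).symm.trans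
          ((σ : Equiv.Perm (Fin (n+1))).trans (finSuccEquiv' (σ m))))) j) := by
      intro j
      set e := (finSuccEquiv' m).symm.trans
          ((σ : Equiv.Perm (Fin (n+1))).trans (finSuccEquiv' (σ m))) with he
      have h1 : e (some j) = finSuccEquiv' (σ m) (σ (m.succAbove j)) := by
        simp [he, Equiv.trans_apply, finSuccEquiv'_symm_some]
      have hne : σ (m.succAbove j) ≠ σ m := by
        intro h
        exact Fin.succAbove_ne m j (σ.injective h)
      obtain ⟨k, hk⟩ := Fin.exists_succAbove_eq hne
      have h2 : e (some j) = some k := by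
        rw [h1, ← hk, finSuccEquiv'_succAbove]
      have h3 := Equiv.removeNone_some e ⟨k, h2⟩
      rw [h2] at h3
      rw [← hk]
      congr 1
      exact (Option.some_injective _ h3.symm)
    have hfun : (x ∘ σ) ∘ m.succAbove =
        (x ∘ (σ m).succAbove) ∘ (Equiv.removeNone ((finSuccEquiv' m).symm.trans
          ((σ : Equiv.Perm (Fin (n+1))).trans (finSuccEquiv' (σ m))))) := by
      funext j
      simp only [Function.comp_apply]
      rw [hcomp j]
    calc Q ((x ∘ σ) ∘ m.succAbove) * L ((x ∘ σ) m)
        = Q ((x ∘ (σ m).succAbove) ∘ (Equiv.removeNone ((finSuccEquiv' m).symm.trans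
          ((σ : Equiv.Perm (Fin (n+1))).trans (finSuccEquiv' (σ m)))))) * L (x (σ m)) := by
          rw [hfun]; rfl
      _ = Q (x ∘ (σ m).succAbove) * L (x (σ m)) := by
          congr 1
          exact hQsym' (Equiv.removeNone ((finSuccEquiv' m).symm.trans
            ((σ : Equiv.Perm (Fin (n+1))).trans (finSuccEquiv' (σ m))))) (x ∘ (σ m).succAbove)
  · -- multiaffine
    intro i x
    have key : ∀ m : Fin (n + 1), ∃ a b : ℝ, ∀ t : ℝ,
        Q ((Function.update x i t) ∘ m.succAbove) * L (Function.update x i t m)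
          = a + b * t := by
      intro m
      by_cases him : m = i
      · subst him
        refine ⟨Q (x ∘ m.succAbove) * ω₀, Q (x ∘ m.succAbove) * (ω₁ - ω₀), fun t => ?_⟩
        have h1 : (Function.update x m t) ∘ m.succAbove = x ∘ m.succAbove :=
          Function.update_comp_eq_of_forall_ne _ _ (fun j => Fin.succAbove_ne m j)
        rw [h1, Function.update_self, hL]
        ring
      · obtain ⟨k, hk⟩ := Fin.exists_succAbove_eq (Ne.symm him)
        obtain ⟨a, b, hab⟩ := hQaff' k (x ∘ m.succAbove)
        refine ⟨a * L (x m), b * L (x m), fun t => ?_⟩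
        have h1 : (Function.update x i t) ∘ m.succAbove =
            Function.update (x ∘ m.succAbove) k t := by
          rw [← hk]
          exact Function.update_comp_eq_of_injective x Fin.succAbove_right_injective k t
        rw [h1, Function.update_of_ne him, hab]
        ring
    choose a b hab using key
    refine ⟨(1 / ((n : ℝ) + 1)) * ∑ m, a m, (1 / ((n : ℝ) + 1)) * ∑ m, b m, fun t => ?_⟩
    rw [hR']
    have : ∑ m : Fin (n + 1),
        Q ((Function.update x i t) ∘ m.succAbove) * L (Function.update x i t m)
        = ∑ m, (a m + b m * t) := Finset.sum_congr rfl fun m _ => hab m t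
    rw [this, Finset.sum_add_distrib, ← Finset.sum_mul]
    ring
  · -- diagonal
    intro ξ
    rw [hR']
    have : ∀ m : Fin (n + 1),
        Q ((fun _ : Fin (n+1) => ξ) ∘ m.succAbove) * L ((fun _ : Fin (n+1) => ξ) m)
          = q.eval ξ * L ξ := by
      intro m
      have : (fun _ : Fin (n+1) => ξ) ∘ m.succAbove = fun _ : Fin n => ξ := rfl
      rw [this, hQdiag']
    rw [Finset.sum_congr rfl (fun m _ => this m), Finset.sum_const]
    simp only [Finset.card_univ, Fintype.card_fin, nsmul_eq_mul]
    push_cast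
    field_simp
end

section
/- Let p ≥ 1, let q be a real polynomial of degree at most p, and let Q : ℝ^p → ℝ be a symmetric multiaffine function with Q(ξ,…,ξ) = q(ξ) for all ξ ∈ ℝ. Then q = Σ_{ι=0}^{p} Q(e_ι) · b_{p,ι}, where e_ι ∈ ℝ^p denotes the vector having p−ι coordinates equal to 0 and ι coordinates equal to 1, and b_{p,ι}(ξ) = C(p,ι)·ξ^ι·(1−ξ)^{p−ι} is the Bernstein polynomial of degree p and index ι. -/
open Finset

open Finset

lemma aux_interp {p : ℕ} (Q : (Fin p → ℝ) → ℝ)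
    (hQaff : ∀ (i : Fin p) (x : Fin p → ℝ), ∃ a b : ℝ,
      ∀ t : ℝ, Q (Function.update x i t) = a + b * t)
    (i : Fin p) (x : Fin p → ℝ) (ξ : ℝ) :
    Q (Function.update x i ξ)
      = (1 - ξ) * Q (Function.update x i 0) + ξ * Q (Function.update x i 1) := by
  obtain ⟨a, b, h⟩ := hQaff i x
  rw [h, h, h]; ring

-- permutation sending {j | j ∈ T'} to {j | j ∈ T} when cards agree
lemma aux_perm {p : ℕ} (T T' : Finset (Fin p)) (h : T.card = T'.card) :
    ∃ σ : Equiv.Perm (Fin p), ∀ j, (σ j ∈ T ↔ j ∈ T') := by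
  classical
  have h1 : Fintype.card {x // x ∈ T'} = Fintype.card {x // x ∈ T} := by
    simpa [Fintype.card_coe] using h.symm
  have h2 : Fintype.card {x // ¬ x ∈ T'} = Fintype.card {x // ¬ x ∈ T} := by
    rw [Fintype.card_subtype_compl, Fintype.card_subtype_compl, h1]
  let e1 : {x // x ∈ T'} ≃ {x // x ∈ T} := Fintype.equivOfCardEq h1
  let e2 : {x // ¬ x ∈ T'} ≃ {x // ¬ x ∈ T} := Fintype.equivOfCardEq h2
  refine ⟨(Equiv.sumCompl (· ∈ T')).symm.trans ((e1.sumCongr e2).trans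
    (Equiv.sumCompl (· ∈ T))), fun j => ?_⟩
  by_cases hj : j ∈ T'
  · simp [Equiv.sumCompl_symm_apply_of_pos hj, hj, (e1 ⟨j, hj⟩).2]
  · simp [Equiv.sumCompl_symm_apply_of_neg hj, hj, (e2 ⟨j, hj⟩).2]

lemma aux_card_filter {p n : ℕ} (h : n ≤ p) :
    (Finset.univ.filter (fun j : Fin p => (j : ℕ) < n)).card = n := by
  classical
  have : Finset.univ.filter (fun j : Fin p => (j : ℕ) < n)
      = Finset.map (Fin.castLEEmb h) Finset.univ := by
    ext j
    simp only [mem_filter, mem_univ, true_and, mem_map, Fin.castLEEmb_apply]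
    constructor
    · intro hj; exact ⟨⟨j, hj⟩, by simp⟩
    · rintro ⟨i, -, rfl⟩; exact i.2
  rw [this, card_map, card_univ, Fintype.card_fin]

lemma aux_interp' {p : ℕ} (Q : (Fin p → ℝ) → ℝ)
    (hQaff : ∀ (i : Fin p) (x : Fin p → ℝ), ∃ a b : ℝ,
      ∀ t : ℝ, Q (Function.update x i t) = a + b * t)
    (i : Fin p) (x : Fin p → ℝ) (ξ : ℝ) :
    Q (Function.update x i ξ)
      = (1 - ξ) * Q (Function.update x i 0) + ξ * Q (Function.update x i 1) := by
  obtain ⟨a, b, h⟩ := hQaff i x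
  rw [h, h, h]; ring

lemma aux_key {p : ℕ} (Q : (Fin p → ℝ) → ℝ)
    (hQaff : ∀ (i : Fin p) (x : Fin p → ℝ), ∃ a b : ℝ,
      ∀ t : ℝ, Q (Function.update x i t) = a + b * t)
    (ξ : ℝ) :
    ∀ S : Finset (Fin p), ∀ x : Fin p → ℝ,
    Q (fun j => if j ∈ S then ξ else x j)
      = ∑ T ∈ S.powerset, ξ ^ T.card * (1 - ξ) ^ (S.card - T.card) *
          Q (fun j => if j ∈ T then 1 else if j ∈ S then 0 else x j) := by
  classical
  intro S
  induction S using Finset.induction_on with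
  | empty => intro x; simp
  | @insert i S hi ih =>
    intro x
    have hfun : (fun j => if j ∈ insert i S then ξ else x j)
        = Function.update (fun j => if j ∈ S then ξ else x j) i ξ := by
      funext j
      rcases eq_or_ne j i with rfl | hji
      · simp
      · simp [Function.update_of_ne hji, mem_insert, hji]
    have h0 : ∀ t : ℝ, Function.update (fun j => if j ∈ S then ξ else x j) i t
        = fun j => if j ∈ S then ξ else (Function.update x i t) j := by
      intro t; funext j
      rcases eq_or_ne j i with rfl | hji
      · simp [hi]
      · simp [Function.update_of_ne hji]
    rw [hfun, aux_interp' Q hQaff, h0, h0, ih, ih, Finset.mul_sum, Finset.mul_sum,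
      Finset.powerset_insert, Finset.sum_union, Finset.sum_image]
    · have hSc : (insert i S).card = S.card + 1 := card_insert_of_notMem hi
      congr 1
      · refine Finset.sum_congr rfl fun T hT => ?_
        have hTS : T ⊆ S := mem_powerset.mp hT
        have hTc : T.card ≤ S.card := card_le_card hTS
        have hg : (fun j => if j ∈ T then (1:ℝ) else if j ∈ S then 0
              else (Function.update x i 0) j)
            = fun j => if j ∈ T then 1 else if j ∈ insert i S then 0 else x j := by
          funext j
          rcases eq_or_ne j i with rfl | hji
          · simp [fun h => hi (hTS h), hi]
          · simp [Function.update_of_ne hji, mem_insert, hji]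
        rw [hg, hSc]
        rw [show S.card + 1 - T.card = (S.card - T.card) + 1 by omega]
        ring
      · refine Finset.sum_congr rfl fun T hT => ?_
        have hTS : T ⊆ S := mem_powerset.mp hT
        have hiT : i ∉ T := fun h => hi (hTS h)
        have hTc : T.card ≤ S.card := card_le_card hTS
        have hg : (fun j => if j ∈ T then (1:ℝ) else if j ∈ S then 0
              else (Function.update x i 1) j)
            = fun j => if j ∈ insert i T then 1 else if j ∈ insert i S then 0 else x j := by
          funext j
          rcases eq_or_ne j i with rfl | hji
          · simp [hiT, hi]
          · simp [Function.update_of_ne hji, mem_insert, hji]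
        rw [hg, hSc, card_insert_of_notMem hiT]
        rw [show S.card + 1 - (T.card + 1) = S.card - T.card by omega]
        ring
    · intro U hU V hV hUV
      have hiU : i ∉ U := fun h => hi (mem_powerset.mp hU h)
      have hiV : i ∉ V := fun h => hi (mem_powerset.mp hV h)
      have := congrArg (Finset.erase · i) hUV
      simpa [Finset.erase_insert hiU, Finset.erase_insert hiV] using this
    · rw [Finset.disjoint_left]
      intro T hT hT2
      obtain ⟨U, hU, rfl⟩ := mem_image.mp hT2
      exact hi (mem_powerset.mp hT (mem_insert_self i U))


/-- **Bernstein–Bézier control points from blossom values.**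
If `Q : ℝ^p → ℝ` is the blossom of a polynomial `q` of degree at most `p`, then
`q(ξ) = Σ_{ι=0}^{p} Q(e_ι) · C(p,ι)·ξ^ι·(1-ξ)^{p-ι}`, where `e_ι ∈ ℝ^p` is the vector
with `ι` coordinates equal to `1` and `p-ι` coordinates equal to `0`. -/
theorem blossom_bernstein_control_points (p : ℕ) (hp : 1 ≤ p) (q : Polynomial ℝ)
    (hq : q.natDegree ≤ p)
    (Q : (Fin p → ℝ) → ℝ)
    (hQsym : ∀ (σ : Equiv.Perm (Fin p)) (x : Fin p → ℝ), Q (x ∘ σ) = Q x)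
    (hQaff : ∀ (i : Fin p) (x : Fin p → ℝ), ∃ a b : ℝ,
      ∀ t : ℝ, Q (Function.update x i t) = a + b * t)
    (hQdiag : ∀ ξ : ℝ, Q (fun _ => ξ) = q.eval ξ)
    (e : ℕ → Fin p → ℝ)
    (he : ∀ (ι : ℕ) (j : Fin p), e ι j = if (j : ℕ) < ι then 1 else 0) :
    ∀ ξ : ℝ, q.eval ξ =
      ∑ ι ∈ Finset.range (p + 1),
        Q (e ι) * ((p.choose ι : ℝ) * ξ ^ ι * (1 - ξ) ^ (p - ι)) := by
  classical
  intro ξ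
  have hkey := aux_key Q hQaff ξ Finset.univ (fun _ => 0)
  have hL : (fun j : Fin p => if j ∈ Finset.univ then ξ else (0:ℝ)) = fun _ => ξ := by
    funext j; simp
  rw [hL, hQdiag] at hkey
  have hsym : ∀ T : Finset (Fin p),
      Q (fun j => if j ∈ T then (1:ℝ) else 0) = Q (e T.card) := by
    intro T
    have hTle : T.card ≤ p := by
      simpa using Finset.card_le_card (Finset.subset_univ T)
    obtain ⟨σ, hσ⟩ := aux_perm T (Finset.univ.filter fun j : Fin p => (j:ℕ) < T.card)
      (aux_card_filter hTle).symm
    have hcomp : (fun j => if j ∈ T then (1:ℝ) else 0) ∘ σ = e T.card := by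
      funext j
      have := hσ j
      simp only [Finset.mem_filter, Finset.mem_univ, true_and] at this
      simp [Function.comp, he, this]
    rw [← hQsym σ, hcomp]
  have huc : (Finset.univ : Finset (Fin p)).card = p := by simp
  calc q.eval ξ
      = ∑ T ∈ (Finset.univ : Finset (Fin p)).powerset,
          ξ ^ T.card * (1 - ξ) ^ (p - T.card) * Q (e T.card) := by
        rw [hkey]
        refine Finset.sum_congr rfl fun T hT => ?_
        rw [huc]
        congr 1
        rw [← hsym T]
        congr 1
        funext j
        by_cases hj : j ∈ T <;> simp [hj]
    _ = ∑ ι ∈ Finset.range ((Finset.univ : Finset (Fin p)).card + 1),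
          ∑ T ∈ Finset.powersetCard ι (Finset.univ : Finset (Fin p)),
            ξ ^ T.card * (1 - ξ) ^ (p - T.card) * Q (e T.card) :=
        Finset.sum_powerset _ _
    _ = ∑ ι ∈ Finset.range (p + 1),
          Q (e ι) * ((p.choose ι : ℝ) * ξ ^ ι * (1 - ξ) ^ (p - ι)) := by
        rw [huc]
        refine Finset.sum_congr rfl fun ι hι => ?_
        have : ∀ T ∈ Finset.powersetCard ι (Finset.univ : Finset (Fin p)),
            ξ ^ T.card * (1 - ξ) ^ (p - T.card) * Q (e T.card)
              = ξ ^ ι * (1 - ξ) ^ (p - ι) * Q (e ι) := by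
          intro T hT
          rw [(Finset.mem_powersetCard.mp hT).2]
        rw [Finset.sum_congr rfl this, Finset.sum_const, Finset.card_powersetCard, huc,
          nsmul_eq_mul]
        ring
end

section
/- Let U ⊂ ℝ² be open, let φ : U → ℝ be continuously differentiable on U, and let F, F' : ℝ² → ℝ² be continuously differentiable maps whose images are contained in U and which agree on the line {0} × ℝ, i.e., F(0, ξ) = F'(0, ξ) for all ξ ∈ ℝ. Set g = φ ∘ F and g' = φ ∘ F'. Then for every ξ ∈ ℝ: det[∂₁F'(0, ξ), ∂₂F(0, ξ)]·∂₁g(0, ξ) − det[∂₁F(0, ξ), ∂₂F(0, ξ)]·∂₁g'(0, ξ) + det[∂₁F(0, ξ), ∂₁F'(0, ξ)]·∂₂g(0, ξ) = 0. -/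
/-- `det[a, b] = a₁b₂ - a₂b₁`, the determinant of the 2×2 matrix with columns `a` and `b`. -/
def det2 (a b : ℝ × ℝ) : ℝ := a.1 * b.2 - a.2 * b.1

lemma clm_apply_decomp (L : ℝ × ℝ →L[ℝ] ℝ) (a : ℝ × ℝ) :
    L a = a.1 * L (1, 0) + a.2 * L (0, 1) := by
  have : a = a.1 • ((1 : ℝ), (0 : ℝ)) + a.2 • ((0 : ℝ), (1 : ℝ)) := by
    simp [Prod.ext_iff]
  rw [this, map_add, map_smul, map_smul]
  simp [smul_eq_mul]

/-- **Necessity of the C¹-smoothness condition (C1) across a common interface:**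
if `φ` is `C¹` on an open set `U ⊆ ℝ²`, `F, F' : ℝ² → ℝ²` are `C¹` maps into `U` agreeing
on the line `{0} × ℝ`, and `g = φ ∘ F`, `g' = φ ∘ F'`, then for every `ξ ∈ ℝ`
`det[∂₁F'(0,ξ), ∂₂F(0,ξ)]·∂₁g(0,ξ) − det[∂₁F(0,ξ), ∂₂F(0,ξ)]·∂₁g'(0,ξ)
  + det[∂₁F(0,ξ), ∂₁F'(0,ξ)]·∂₂g(0,ξ) = 0`. -/
theorem C1_interface_condition (U : Set (ℝ × ℝ)) (hU : IsOpen U)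
    (φ : ℝ × ℝ → ℝ) (hφ : ContDiffOn ℝ 1 φ U)
    (F F' : ℝ × ℝ → ℝ × ℝ) (hF : ContDiff ℝ 1 F) (hF' : ContDiff ℝ 1 F')
    (hFU : ∀ x : ℝ × ℝ, F x ∈ U) (hF'U : ∀ x : ℝ × ℝ, F' x ∈ U)
    (hagree : ∀ ξ : ℝ, F (0, ξ) = F' (0, ξ))
    (g g' : ℝ × ℝ → ℝ) (hg : g = φ ∘ F) (hg' : g' = φ ∘ F') :
    ∀ ξ : ℝ,
      det2 (deriv (fun s : ℝ => F' (s, ξ)) 0) (deriv (fun s : ℝ => F (0, s)) ξ)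
          * deriv (fun s : ℝ => g (s, ξ)) 0
        - det2 (deriv (fun s : ℝ => F (s, ξ)) 0) (deriv (fun s : ℝ => F (0, s)) ξ)
          * deriv (fun s : ℝ => g' (s, ξ)) 0
        + det2 (deriv (fun s : ℝ => F (s, ξ)) 0) (deriv (fun s : ℝ => F' (s, ξ)) 0)
          * deriv (fun s : ℝ => g (0, s)) ξ = 0 := by
  intro ξ
  subst hg hg'
  set x₀ : ℝ × ℝ := F (0, ξ) with hx₀
  have hφdiff : DifferentiableAt ℝ φ x₀ :=
    (hφ.differentiableOn one_ne_zero).differentiableAt (hU.mem_nhds (hFU _))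
  set L : ℝ × ℝ →L[ℝ] ℝ := fderiv ℝ φ x₀ with hL
  have hφd : HasFDerivAt φ L x₀ := hφdiff.hasFDerivAt
  -- three curves
  have hc1 : HasDerivAt (fun s : ℝ => F (s, ξ)) (deriv (fun s : ℝ => F (s, ξ)) 0) 0 := by
    exact (((hF.differentiable one_ne_zero).comp
      (differentiable_id.prodMk (differentiable_const ξ))) 0).hasDerivAt
  have hc2 : HasDerivAt (fun s : ℝ => F' (s, ξ)) (deriv (fun s : ℝ => F' (s, ξ)) 0) 0 := by
    exact (((hF'.differentiable one_ne_zero).comp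
      (differentiable_id.prodMk (differentiable_const ξ))) 0).hasDerivAt
  have hc3 : HasDerivAt (fun s : ℝ => F (0, s)) (deriv (fun s : ℝ => F (0, s)) ξ) ξ := by
    exact (((hF.differentiable one_ne_zero).comp
      ((differentiable_const (0:ℝ)).prodMk differentiable_id)) ξ).hasDerivAt
  set a := deriv (fun s : ℝ => F (s, ξ)) 0
  set b := deriv (fun s : ℝ => F' (s, ξ)) 0
  set c := deriv (fun s : ℝ => F (0, s)) ξ
  have hφd' : HasFDerivAt φ L (F' (0, ξ)) := by rw [← hagree]; exact hφd
  have h1 : HasDerivAt (fun s : ℝ => (φ ∘ F) (s, ξ)) (L a) 0 := hφd.comp_hasDerivAt 0 hc1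
  have h2 : HasDerivAt (fun s : ℝ => (φ ∘ F') (s, ξ)) (L b) 0 := hφd'.comp_hasDerivAt 0 hc2
  have h3 : HasDerivAt (fun s : ℝ => (φ ∘ F) (0, s)) (L c) ξ := hφd.comp_hasDerivAt ξ hc3
  rw [h1.deriv, h2.deriv, h3.deriv, clm_apply_decomp L a, clm_apply_decomp L b,
    clm_apply_decomp L c]
  simp only [det2]
  ring
end

section
/- Let f : ℝ² → ℝ be twice continuously differentiable (of class C²) and suppose that at every point x of the frontier of the open unit square (0,1)×(0,1) one has f(x) = 0, Df(x) = 0 and D²f(x) = 0. Then the function h : ℝ² → ℝ defined by h(x) = f(x) for x in the closed unit square [0,1]×[0,1] and h(x) = 0 otherwise is twice continuously differentiable on ℝ². -/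
open Set Filter Asymptotics Topology

lemma indicator_zero_apply' {E F : Type*} [Zero F] {K : Set E} {g : E → F} {x : E}
    (hx : g x = 0) : Set.indicator K g x = 0 := by
  by_cases h : x ∈ K <;> simp [h, hx]

/-- If `g x = 0` and `g` has derivative `0` at `x`, then any indicator of `g`
has derivative `0` at `x`. -/
lemma indicator_hasFDerivAt'' {E F : Type*} [NormedAddCommGroup E] [NormedSpace ℝ E]
    [NormedAddCommGroup F] [NormedSpace ℝ F] {g : E → F} {K : Set E} {x : E}
    (hgx : g x = 0) (hg : HasFDerivAt g (0 : E →L[ℝ] F) x) :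
    HasFDerivAt (Set.indicator K g) (0 : E →L[ℝ] F) x := by
  rw [hasFDerivAt_iff_isLittleO]
  have h1 := hg.isLittleO
  rw [Asymptotics.isLittleO_iff] at h1 ⊢
  intro ε hε
  filter_upwards [h1 hε] with y hy
  have h2 : Set.indicator K g x = 0 := indicator_zero_apply' hgx
  simp only [h2, sub_zero, ContinuousLinearMap.zero_apply, hgx] at *
  calc ‖Set.indicator K g y‖ ≤ ‖g y‖ := norm_indicator_le_norm_self g y
    _ ≤ ε * ‖y - x‖ := hy

/-- If `g x = 0` and `g` is continuous at `x`, then any indicator of `g`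
is continuous at `x`. -/
lemma indicator_continuousAt' {E F : Type*} [TopologicalSpace E]
    [NormedAddCommGroup F] {g : E → F} {K : Set E} {x : E}
    (hgx : g x = 0) (hg : ContinuousAt g x) :
    ContinuousAt (Set.indicator K g) x := by
  rw [ContinuousAt, indicator_zero_apply' hgx]
  apply squeeze_zero_norm (fun y => norm_indicator_le_norm_self g y)
  have : Tendsto (fun y => ‖g y‖) (𝓝 x) (𝓝 ‖g x‖) := hg.norm
  simpa [hgx] using this

lemma curryLeft_zero' {𝕜 : Type*} [NontriviallyNormedField 𝕜]
    {n : ℕ} {E F : Type*} [NormedAddCommGroup E] [NormedSpace 𝕜 E]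
    [NormedAddCommGroup F] [NormedSpace 𝕜 F] :
    (0 : ContinuousMultilinearMap 𝕜 (fun _ : Fin (n + 1) => E) F).curryLeft = 0 := by
  ext v m
  simp

/-- **Zero extension of a C² function from the unit square:**
if `f : ℝ² → ℝ` is of class `C²` and its value, total derivative and second derivative
vanish at every point of the frontier of the open unit square `(0,1)×(0,1)`, then the
function `h` equal to `f` on the closed unit square `[0,1]×[0,1]` and `0` elsewhere is
twice continuously differentiable on `ℝ²`. -/
theorem C2_zero_extension_unit_square (f : ℝ × ℝ → ℝ) (hf : ContDiff ℝ 2 f)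
    (hbd : ∀ x ∈ frontier ((Set.Ioo (0:ℝ) 1) ×ˢ (Set.Ioo (0:ℝ) 1)),
      f x = 0 ∧ fderiv ℝ f x = 0 ∧ iteratedFDeriv ℝ 2 f x = 0)
    (h : ℝ × ℝ → ℝ)
    (hh : h = Set.indicator ((Set.Icc (0:ℝ) 1) ×ˢ (Set.Icc (0:ℝ) 1)) f) :
    ContDiff ℝ 2 h := by
  classical
  set K : Set (ℝ × ℝ) := (Set.Icc (0:ℝ) 1) ×ˢ (Set.Icc (0:ℝ) 1) with hK
  set s : Set (ℝ × ℝ) := (Set.Ioo (0:ℝ) 1) ×ˢ (Set.Ioo (0:ℝ) 1) with hs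
  have hsopen : IsOpen s := isOpen_Ioo.prod isOpen_Ioo
  have hKclosed : IsClosed K := isClosed_Icc.prod isClosed_Icc
  have hsub : s ⊆ K := Set.prod_mono Set.Ioo_subset_Icc_self Set.Ioo_subset_Icc_self
  have hsK : closure s = K := by
    rw [hs, hK, closure_prod_eq, closure_Ioo (by norm_num : (0:ℝ) ≠ 1)]
  have hfr : frontier s = K \ s := by
    rw [frontier, hsK, hsopen.interior_eq]
  -- The full Taylor series of `f` up to order 2.
  have hft : HasFTaylorSeriesUpTo 2 f (ftaylorSeries ℝ f) := contDiff_iff_ftaylorSeries.mp hf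
  -- Vanishing of all iterated derivatives of order ≤ 2 on the frontier.
  have hz : ∀ x ∈ K \ s, ∀ m : ℕ, m ≤ 2 → iteratedFDeriv ℝ m f x = 0 := by
    intro x hx m hm
    have hx' : x ∈ frontier s := hfr ▸ hx
    obtain ⟨h0, h1, h2⟩ := hbd x hx'
    interval_cases m
    · ext v; simp [h0]
    · ext v; simp [iteratedFDeriv_one_apply, h1]
    · exact h2
  -- The candidate Taylor series of `h`.
  set p : ℝ × ℝ → FormalMultilinearSeries ℝ (ℝ × ℝ) ℝ :=
    fun x m => Set.indicator K (fun y => iteratedFDeriv ℝ m f y) x with hp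
  have hpK : ∀ x ∈ K, ∀ m, p x m = iteratedFDeriv ℝ m f x := by
    intro x hx m; simp [hp, Set.indicator_of_mem hx]
  have hpKc : ∀ x ∉ K, ∀ m, p x m = 0 := by
    intro x hx m; simp [hp, Set.indicator_of_notMem hx]
  have key : HasFTaylorSeriesUpTo 2 h p := by
    constructor
    · -- zero_eq
      intro x
      by_cases hxK : x ∈ K
      · rw [hpK x hxK 0, hh, Set.indicator_of_mem hxK]
        exact hft.zero_eq x
      · rw [hpKc x hxK 0, hh, Set.indicator_of_notMem hxK]
        simp
    · -- fderiv
      intro m hm x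
      have hm2 : (m : ℕ) < 2 := by exact_mod_cast hm
      by_cases hxK : x ∈ K
      · by_cases hxs : x ∈ s
        · -- interior point: `p · m` agrees with the iterated derivative near `x`
          have hev : (fun y => p y m) =ᶠ[𝓝 x] (fun y => iteratedFDeriv ℝ m f y) := by
            filter_upwards [hsopen.mem_nhds hxs] with y hy
            exact hpK y (hsub hy) m
          have hd : HasFDerivAt (fun y => iteratedFDeriv ℝ m f y)
              (iteratedFDeriv ℝ (m + 1) f x).curryLeft x := hft.fderiv m hm x
          rw [hpK x hxK (m + 1)]
          exact hd.congr_of_eventuallyEq hev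
        · -- frontier point: derivative is zero by the little-o estimate
          have hxfr : x ∈ K \ s := ⟨hxK, hxs⟩
          have h1 : iteratedFDeriv ℝ m f x = 0 := hz x hxfr m (le_of_lt hm2)
          have h2 : iteratedFDeriv ℝ (m + 1) f x = 0 := hz x hxfr (m + 1) hm2
          have hd : HasFDerivAt (fun y => iteratedFDeriv ℝ m f y)
              (iteratedFDeriv ℝ (m + 1) f x).curryLeft x := hft.fderiv m hm x
          rw [h2, curryLeft_zero'] at hd
          have := indicator_hasFDerivAt'' (K := K) h1 hd
          rw [hpK x hxK (m + 1), h2, curryLeft_zero']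
          exact this
      · -- exterior point: `p · m` is eventually zero
        have hev : (fun y => p y m) =ᶠ[𝓝 x] (fun _ => 0) := by
          filter_upwards [hKclosed.isOpen_compl.mem_nhds hxK] with y hy
          exact hpKc y hy m
        rw [hpKc x hxK (m + 1), curryLeft_zero']
        exact (hasFDerivAt_const 0 x).congr_of_eventuallyEq hev
    · -- continuity
      intro m hm
      rw [continuous_iff_continuousAt]
      intro x
      have hc : Continuous (fun y => iteratedFDeriv ℝ m f y) := hft.cont m hm
      by_cases hxK : x ∈ K
      · by_cases hxs : x ∈ s
        · have hev : (fun y => iteratedFDeriv ℝ m f y) =ᶠ[𝓝 x] (fun y => p y m) := by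
            filter_upwards [hsopen.mem_nhds hxs] with y hy
            exact (hpK y (hsub hy) m).symm
          exact hc.continuousAt.congr hev
        · have hxfr : x ∈ K \ s := ⟨hxK, hxs⟩
          have hm2 : (m : ℕ) ≤ 2 := by exact_mod_cast hm
          exact indicator_continuousAt' (hz x hxfr m hm2) hc.continuousAt
      · have hev : (fun _ : ℝ × ℝ => (0 : ContinuousMultilinearMap ℝ
            (fun _ : Fin m => ℝ × ℝ) ℝ)) =ᶠ[𝓝 x] (fun y => p y m) := by
          filter_upwards [hKclosed.isOpen_compl.mem_nhds hxK] with y hy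
          exact (hpKc y hy m).symm
        exact continuousAt_const.congr hev
  exact key.contDiff
end

section
/- Let p ≥ 6 and let i, j be integers with 3 ≤ i ≤ p−3 and 3 ≤ j ≤ p−3. Let b_m(ξ) = C(p,m)·ξ^m·(1−ξ)^{p−m} denote the Bernstein polynomial of degree p and index m, and define f(x, y) = b_i(x)·b_j(y). Then the function h : ℝ² → ℝ defined by h(x, y) = f(x, y) for (x, y) in the closed unit square [0,1]×[0,1] and h(x, y) = 0 otherwise is twice continuously differentiable on ℝ². -/
open Set Filter Asymptotics

lemma maxpow_abs_le (t : ℝ) (n : ℕ) : max t 0 ^ n ≤ |t| ^ n :=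
  pow_le_pow_left₀ (le_max_right _ _) (max_le (le_abs_self t) (abs_nonneg t)) n

lemma hasDerivAt_maxpow (n : ℕ) (hn : 1 ≤ n) (x : ℝ) :
    HasDerivAt (fun t : ℝ => max t 0 ^ (n + 1)) ((n + 1 : ℕ) * max x 0 ^ n) x := by
  rcases lt_trichotomy x 0 with hx | rfl | hx
  · have hmax : max x 0 = 0 := max_eq_right hx.le
    have h0 : ((n + 1 : ℕ) : ℝ) * max x 0 ^ n = 0 := by
      rw [hmax, zero_pow (by omega)]; ring
    rw [h0]
    have heq : (fun t : ℝ => max t 0 ^ (n + 1)) =ᶠ[nhds x] fun _ => (0 : ℝ) := by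
      filter_upwards [Iio_mem_nhds hx] with t ht
      rw [max_eq_right (le_of_lt ht), zero_pow (by omega)]
    exact (hasDerivAt_const x (0 : ℝ)).congr_of_eventuallyEq heq
  · have : ((n + 1 : ℕ) : ℝ) * max (0:ℝ) 0 ^ n = 0 := by
      simp [zero_pow (by omega : n ≠ 0)]
    rw [this, hasDerivAt_iff_isLittleO]
    simp only [sub_zero, max_self, zero_pow (by omega : n + 1 ≠ 0), smul_zero]
    rw [Asymptotics.isLittleO_iff]
    intro c hc
    filter_upwards [Metric.ball_mem_nhds (0:ℝ) (lt_min_iff.mpr ⟨zero_lt_one, hc⟩)] with t ht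
    rw [Metric.mem_ball, Real.dist_eq, sub_zero] at ht
    have ht1 : |t| ≤ 1 := le_of_lt (lt_of_lt_of_le ht (min_le_left _ _))
    have htc : |t| ≤ c := le_of_lt (lt_of_lt_of_le ht (min_le_right _ _))
    have htn : |t| ^ n ≤ c :=
      le_trans (pow_le_of_le_one (abs_nonneg t) ht1 (by omega)) htc
    calc ‖max t 0 ^ (n + 1)‖ = max t 0 ^ (n + 1) := by
          rw [Real.norm_eq_abs, abs_of_nonneg (pow_nonneg (le_max_right _ _) _)]
      _ ≤ |t| ^ (n + 1) := maxpow_abs_le t (n + 1)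
      _ = |t| ^ n * |t| := by ring
      _ ≤ c * |t| := mul_le_mul_of_nonneg_right htn (abs_nonneg t)
      _ = c * ‖t‖ := by rw [Real.norm_eq_abs]
  · have hmax : max x 0 = x := max_eq_left hx.le
    have heq : (fun t : ℝ => max t 0 ^ (n + 1)) =ᶠ[nhds x] fun t => t ^ (n + 1) := by
      filter_upwards [Ioi_mem_nhds hx] with t ht
      rw [max_eq_left (le_of_lt ht)]
    rw [hmax]
    simpa using (hasDerivAt_pow (n + 1) x).congr_of_eventuallyEq heq

lemma contDiff_maxpow : ∀ (k n : ℕ), k + 1 ≤ n → ContDiff ℝ k (fun t : ℝ => max t 0 ^ n) := by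
  intro k
  induction k with
  | zero =>
    intro n _
    rw [show ((0 : ℕ) : WithTop ℕ∞) = 0 from rfl, contDiff_zero]
    exact (continuous_id.max continuous_const).pow n
  | succ k ih =>
    intro n hn
    obtain ⟨m, rfl⟩ : ∃ m, n = m + 1 := ⟨n - 1, by omega⟩
    have hm : 1 ≤ m := by omega
    have hdiff : ∀ x : ℝ, HasDerivAt (fun t : ℝ => max t 0 ^ (m + 1))
        ((m + 1 : ℕ) * max x 0 ^ m) x := hasDerivAt_maxpow m hm
    have hderiv : deriv (fun t : ℝ => max t 0 ^ (m + 1)) =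
        fun x : ℝ => ((m + 1 : ℕ) : ℝ) * max x 0 ^ m := by
      funext x; exact (hdiff x).deriv
    rw [show ((k + 1 : ℕ) : WithTop ℕ∞) = (k : WithTop ℕ∞) + 1 by push_cast; rfl,
      contDiff_succ_iff_deriv]
    refine ⟨fun x => (hdiff x).differentiableAt, by simp, ?_⟩
    rw [hderiv]
    exact contDiff_const.mul (ih m (by omega))

/-- **Zero extension of interior tensor-product Bernstein basis functions is C²:**
for `p ≥ 6` and `3 ≤ i, j ≤ p-3`, the function equal to `b_i(x)·b_j(y)` (a product of
Bernstein polynomials of degree `p`) on the closed unit square `[0,1]×[0,1]` and `0`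
elsewhere is twice continuously differentiable on `ℝ²`. -/
theorem C2_zero_extension_bernstein (p : ℕ) (hp : 6 ≤ p)
    (i j : ℕ) (hi : 3 ≤ i) (hi' : i ≤ p - 3) (hj : 3 ≤ j) (hj' : j ≤ p - 3)
    (b : ℕ → ℝ → ℝ)
    (hb : ∀ (m : ℕ) (ξ : ℝ), b m ξ = (p.choose m : ℝ) * ξ ^ m * (1 - ξ) ^ (p - m))
    (f : ℝ × ℝ → ℝ) (hf : ∀ x y : ℝ, f (x, y) = b i x * b j y)
    (h : ℝ × ℝ → ℝ)
    (hh : h = Set.indicator ((Set.Icc (0:ℝ) 1) ×ˢ (Set.Icc (0:ℝ) 1)) f) :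
    ContDiff ℝ 2 h := by
  have hpi : 3 ≤ p - i := by omega
  have hpj : 3 ≤ p - j := by omega
  have key : h = fun z : ℝ × ℝ =>
      ((p.choose i : ℝ) * max z.1 0 ^ i * max (1 - z.1) 0 ^ (p - i)) *
      ((p.choose j : ℝ) * max z.2 0 ^ j * max (1 - z.2) 0 ^ (p - j)) := by
    funext z
    obtain ⟨x, y⟩ := z
    rw [hh]
    by_cases hz : (x, y) ∈ (Set.Icc (0:ℝ) 1) ×ˢ (Set.Icc (0:ℝ) 1)
    · rw [Set.indicator_of_mem hz, hf, hb, hb]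
      obtain ⟨⟨hx0, hx1⟩, hy0, hy1⟩ := hz
      simp only [max_eq_left hx0, max_eq_left hy0,
        max_eq_left (by linarith : (0:ℝ) ≤ 1 - x), max_eq_left (by linarith : (0:ℝ) ≤ 1 - y)]
    · rw [Set.indicator_of_notMem hz]
      simp only [Set.mem_prod, Set.mem_Icc, not_and_or, not_le] at hz
      rcases hz with (hx | hx) | (hy | hy)
      · rw [max_eq_right hx.le, zero_pow (by omega : i ≠ 0)]; ring
      · rw [max_eq_right (by linarith : 1 - x ≤ 0), zero_pow (by omega : p - i ≠ 0)]; ring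
      · rw [max_eq_right hy.le, zero_pow (by omega : j ≠ 0)]; ring
      · rw [max_eq_right (by linarith : 1 - y ≤ 0), zero_pow (by omega : p - j ≠ 0)]; ring
  rw [key]
  have h2 : (2 : WithTop ℕ∞) = ((2 : ℕ) : WithTop ℕ∞) := by norm_cast
  have c1 : ContDiff ℝ 2 (fun z : ℝ × ℝ => max z.1 0 ^ i) := by
    rw [h2]; exact (contDiff_maxpow 2 i (by omega)).comp contDiff_fst
  have c2 : ContDiff ℝ 2 (fun z : ℝ × ℝ => max (1 - z.1) 0 ^ (p - i)) := by
    rw [h2]; exact (contDiff_maxpow 2 (p - i) (by omega)).comp (contDiff_const.sub contDiff_fst)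
  have c3 : ContDiff ℝ 2 (fun z : ℝ × ℝ => max z.2 0 ^ j) := by
    rw [h2]; exact (contDiff_maxpow 2 j (by omega)).comp contDiff_snd
  have c4 : ContDiff ℝ 2 (fun z : ℝ × ℝ => max (1 - z.2) 0 ^ (p - j)) := by
    rw [h2]; exact (contDiff_maxpow 2 (p - j) (by omega)).comp (contDiff_const.sub contDiff_snd)
  exact ((contDiff_const.mul c1).mul c2).mul ((contDiff_const.mul c3).mul c4)
end
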